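/- Differential Representer Theorem: let K ∈ C_b^3(ℝ^{2d} × ℝ^{2d}) be a Mercer kernel with RKHS H_K, Z^{(1)},…,Z^{(N)} ∈ ℝ^{2d}, X_{σ²,N} ∈ ℝ^{2dN}, J the canonical symplectic matrix, 𝕁 = diag(J,…,J). Then for every λ > 0 the unique minimizer ĥ_{λ,N} over H_K of the regularized empirical risk R̂_{λ,N}(h) := (1/N) Σ_{n=1}^N ‖J∇h(Z^{(n)}) − X^{(n)}_{σ²}‖² + λ‖h‖²_{H_K} can be represented as ĥ_{λ,N} = Σ_{i=1}^N ⟨ĉ_i, ∇₁K(Z^{(i)}, ·)⟩ with coefficient vectors ĉ_1,…,ĉ_N ∈ ℝ^{2d}, and their vectorization ĉ ∈ ℝ^{2dN} is given by ĉ = (∇_{1,2}K(Z_N, Z_N) + λN I)^{-1} 𝕁ᵀ X_{σ²,N}. -/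

import Mathlib

noncomputable section
open MeasureTheory RealInnerProductSpace Filter

/-- `ℝ^n` with the Euclidean structure. -/
abbrev Euc (n : ℕ) : Type := EuclideanSpace ℝ (Fin n)

/-- Directional derivative of a real-valued function in the direction `v`. -/
def dirDeriv {F : Type*} [NormedAddCommGroup F] [NormedSpace ℝ F] (v : F) (f : F → ℝ) :
    F → ℝ := fun x => fderiv ℝ f x v

/-- Iterated partial derivative `D^α f`, where the multi-index `α` is encoded as the list of
the directions of the partial derivatives that are taken. -/
def mderiv {F : Type*} [NormedAddCommGroup F] [NormedSpace ℝ F] (vs : List F) (f : F → ℝ) :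
    F → ℝ := vs.foldr dirDeriv f

/-- The `i`-th coordinate vector of `ℝ^n`. -/
def ee (n : ℕ) (i : Fin n) : Euc n := EuclideanSpace.single i 1

/-- The coordinate directions of `ℝ^n × ℝ^n`; lists of such directions encode the
multi-indices `(α, β)` of mixed partial derivatives `D^{(α,β)} K`. -/
def prodDirs (n : ℕ) : Set (Euc n × Euc n) :=
  (Set.range fun i : Fin n => ((ee n i, 0) : Euc n × Euc n)) ∪
    (Set.range fun i : Fin n => (((0 : Euc n), ee n i) : Euc n × Euc n))

/-- `K` is a Mercer kernel: symmetric and positive semidefinite. -/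
def IsMercer {n : ℕ} (K : Euc n → Euc n → ℝ) : Prop :=
  (∀ x y, K x y = K y x) ∧
    ∀ (m : ℕ) (x : Fin m → Euc n) (c : Fin m → ℝ),
      0 ≤ ∑ i, ∑ j, c i * c j * K (x i) (x j)

/-- `K ∈ C_b^s(ℝ^n × ℝ^n)` : `K` is `s`-times continuously differentiable, and every partial
derivative of order at most `s` is bounded. -/
def KernelCb (n s : ℕ) (K : Euc n → Euc n → ℝ) : Prop :=
  ContDiff ℝ s (fun p : Euc n × Euc n => K p.1 p.2) ∧
    ∀ l : List (Euc n × Euc n), (∀ v ∈ l, v ∈ prodDirs n) → l.length ≤ s →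
      ∃ C, ∀ p : Euc n × Euc n, |mderiv l (fun q : Euc n × Euc n => K q.1 q.2) p| ≤ C

/-- `κ² ≥ ‖K‖_{C_b^s}` : every partial derivative of `K` of order at most `s` is bounded in
absolute value by `κ²` (with `κ ≥ 0`). -/
def KernelDerivBound (n s : ℕ) (K : Euc n → Euc n → ℝ) (κ : ℝ) : Prop :=
  0 ≤ κ ∧ ∀ l : List (Euc n × Euc n), (∀ v ∈ l, v ∈ prodDirs n) → l.length ≤ s →
    ∀ p : Euc n × Euc n, |mderiv l (fun q : Euc n × Euc n => K q.1 q.2) p| ≤ κ ^ 2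

/-- `(H, emb, sec)` realizes the RKHS `H_K` of the kernel `K` : `H` is a Hilbert space of
functions (the linear inclusion `emb` into functions on `ℝ^n` is injective), the kernel
sections `sec x = K (x, ·)` belong to `H`, and the reproducing property holds. -/
def IsRKHS {n : ℕ} {H : Type*} [NormedAddCommGroup H] [InnerProductSpace ℝ H]
    (K : Euc n → Euc n → ℝ) (emb : H →ₗ[ℝ] (Euc n → ℝ)) (sec : Euc n → H) : Prop :=
  Function.Injective emb ∧ (∀ x, emb (sec x) = K x) ∧
    ∀ (f : H) (x : Euc n), emb f x = ⟪f, sec x⟫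

/-- The canonical symplectic matrix `J = [[0, I_d], [-I_d, 0]]` on `ℝ^{2d} = ℝ^{d+d}`. -/
def Jmat (d : ℕ) : Matrix (Fin (d + d)) (Fin (d + d)) ℝ :=
  Matrix.reindex finSumFinEquiv finSumFinEquiv
    (Matrix.fromBlocks (0 : Matrix (Fin d) (Fin d) ℝ) 1 (-1) 0)

/-- Matrix-vector multiplication on Euclidean space. -/
def mulVecE {n : ℕ} (M : Matrix (Fin n) (Fin n) ℝ) (v : Euc n) : Euc n :=
  (WithLp.equiv 2 (Fin n → ℝ)).symm (M.mulVec ((WithLp.equiv 2 (Fin n → ℝ)) v))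

/-- The Hamiltonian vector field `X_f = J ∇f` of a Hamiltonian function `f : ℝ^{2d} → ℝ`. -/
def JgradE (d : ℕ) (f : Euc (d + d) → ℝ) (x : Euc (d + d)) : Euc (d + d) :=
  mulVecE (Jmat d) (gradient f x)

/-- `Dsec x i` is the element `(∂_{1,i} K)_x = (∂K/∂x_i) (x, ·)` of the RKHS; these elements
satisfy the differential reproducing property `∂_i f (x) = ⟪Dsec x i, f⟫` (Theorem 2.8 of the
paper), so that `fun i => Dsec x i` realizes `∇₁K(x, ·)` inside the RKHS. -/
def IsDiffSec {n : ℕ} {H : Type*} [NormedAddCommGroup H] [InnerProductSpace ℝ H]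
    (K : Euc n → Euc n → ℝ) (emb : H →ₗ[ℝ] (Euc n → ℝ)) (Dsec : Euc n → Fin n → H) : Prop :=
  (∀ (x : Euc n) (i : Fin n),
      emb (Dsec x i) = fun y => dirDeriv (ee n i) (fun x' => K x' y) x) ∧
    ∀ (f : H) (x : Euc n) (i : Fin n), dirDeriv (ee n i) (emb f) x = ⟪Dsec x i, f⟫

/-- The differential Gram matrix `∇_{1,2}K(Z_N, Z_N) ∈ ℝ^{2dN × 2dN}` whose
`((n,i),(n',j))` entry is the mixed partial derivative `∂²K/∂z_i ∂z'_j (Z^{(n)}, Z^{(n')})`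
of `K` with respect to its first and second arguments. -/
def gramD {n N : ℕ} (K : Euc n → Euc n → ℝ) (Z : Fin N → Euc n) :
    Matrix (Fin N × Fin n) (Fin N × Fin n) ℝ :=
  Matrix.of fun p q : Fin N × Fin n =>
    dirDeriv (ee n p.2) (fun x => dirDeriv (ee n q.2) (K x) (Z q.1)) (Z p.1)

/-- The block-diagonal matrix `𝕁 = diag(J, …, J) ∈ ℝ^{2dN × 2dN}`. -/
def bigJ (d N : ℕ) : Matrix (Fin N × Fin (d + d)) (Fin N × Fin (d + d)) ℝ :=
  Matrix.of fun p q => if p.1 = q.1 then Jmat d p.2 q.2 else 0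

lemma Jmat_orth (d : ℕ) : (Jmat d).transpose * Jmat d = 1 := by
  rw [Jmat, Matrix.reindex_apply, Matrix.transpose_submatrix,
    Matrix.submatrix_mul_equiv _ _ _ finSumFinEquiv.symm _]
  rw [Matrix.fromBlocks_transpose, Matrix.fromBlocks_multiply]
  simp [Matrix.fromBlocks_one]

lemma bigJ_orth (d N : ℕ) : (bigJ d N).transpose * bigJ d N = 1 := by
  have hJ := Jmat_orth d
  ext ⟨m, i⟩ ⟨m', j⟩
  simp only [Matrix.mul_apply, Matrix.transpose_apply, bigJ, Matrix.of_apply,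
    Fintype.sum_prod_type]
  rw [Finset.sum_eq_single m]
  · by_cases hm : m = m'
    · subst hm
      have h2 : (∑ k, (if m = m then Jmat d k i else 0) * if m = m then Jmat d k j else 0)
          = ((Jmat d).transpose * Jmat d) i j := by
        simp [Matrix.mul_apply, Matrix.transpose_apply]
      rw [h2, hJ, Matrix.one_apply, Matrix.one_apply]
      simp [Prod.ext_iff]
    · simp [hm, Matrix.one_apply, Prod.ext_iff]
  · intro b _ hb
    simp [hb]
  · simp

lemma aux_gram_isUnit {H : Type*} [NormedAddCommGroup H] [InnerProductSpace ℝ H]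
    {ι : Type*} [Fintype ι] [DecidableEq ι]
    (w : ι → H) (μ : ℝ) (hμ : 0 < μ)
    (Gm : Matrix ι ι ℝ) (hGm : ∀ p q, Gm p q = ⟪w p, w q⟫) :
    IsUnit (Gm + μ • (1 : Matrix ι ι ℝ)) := by
  apply Matrix.PosDef.isUnit
  refine Matrix.PosDef.of_dotProduct_mulVec_pos ?_ ?_
  · show (Gm + μ • (1 : Matrix ι ι ℝ)).conjTranspose = _
    ext p q
    simp only [Matrix.conjTranspose_apply, Matrix.add_apply, Matrix.smul_apply, star_trivial,
      hGm, Matrix.one_apply, smul_eq_mul]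
    rw [real_inner_comm]
    congr 1
    by_cases h : p = q
    · simp [h]
    · simp [h, Ne.symm h]
  · intro x hx
    have h1 : dotProduct x (Gm.mulVec x) = ⟪∑ p, x p • w p, ∑ q, x q • w q⟫ := by
      simp only [dotProduct, Matrix.mulVec, sum_inner, inner_sum,
        real_inner_smul_left, real_inner_smul_right, hGm, Finset.mul_sum]
      exact Finset.sum_congr rfl fun p _ => Finset.sum_congr rfl fun q _ => by
        rw [real_inner_comm (w p) (w q)]; ring
    have h2 : dotProduct x (μ • x) = μ * ∑ p, x p ^ 2 := by
      simp only [dotProduct, Pi.smul_apply, smul_eq_mul, Finset.mul_sum, sq]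
      exact Finset.sum_congr rfl fun p _ => by ring
    have hq : dotProduct (star x) ((Gm + μ • (1 : Matrix ι ι ℝ)).mulVec x)
        = ‖∑ p, x p • w p‖ ^ 2 + μ * ∑ p, x p ^ 2 := by
      rw [Matrix.add_mulVec, Matrix.smul_mulVec, Matrix.one_mulVec, star_trivial,
        dotProduct_add, h1, h2, real_inner_self_eq_norm_sq]
    rw [hq]
    have hpos : 0 < ∑ p, x p ^ 2 := by
      obtain ⟨p, hp⟩ := Function.ne_iff.mp hx
      exact Finset.sum_pos' (fun q _ => sq_nonneg _) ⟨p, Finset.mem_univ p, lt_of_le_of_ne (sq_nonneg _) (Ne.symm (pow_ne_zero 2 hp))⟩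
    have := sq_nonneg ‖∑ p, x p • w p‖
    nlinarith

lemma aux_key_identity {H : Type*} [NormedAddCommGroup H] [InnerProductSpace ℝ H]
    {ι : Type*} [Fintype ι]
    (u : ι → H) (y : ι → ℝ) (μ : ℝ) (g : H)
    (hg : (∑ p, (⟪u p, g⟫ - y p) • u p) + μ • g = 0) (h : H) :
    (∑ p, (⟪u p, h⟫ - y p) ^ 2) + μ * ‖h‖ ^ 2
      = ((∑ p, (⟪u p, g⟫ - y p) ^ 2) + μ * ‖g‖ ^ 2)
        + ((∑ p, ⟪u p, h - g⟫ ^ 2) + μ * ‖h - g‖ ^ 2) := by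
  have hzero : ⟪(∑ p, (⟪u p, g⟫ - y p) • u p) + μ • g, h - g⟫ = (0 : ℝ) := by
    rw [hg, inner_zero_left]
  have hzero' : (∑ p, (⟪u p, g⟫ - y p) * ⟪u p, h - g⟫) + μ * ⟪g, h - g⟫ = 0 := by
    simpa [inner_add_left, sum_inner, real_inner_smul_left] using hzero
  have hn : ‖h‖ ^ 2 = ‖g‖ ^ 2 + 2 * ⟪g, h - g⟫ + ‖h - g‖ ^ 2 := by
    have := norm_add_sq_real g (h - g)
    simpa using this
  have expand : (∑ p, (⟪u p, h⟫ - y p) ^ 2)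
      = (∑ p, (⟪u p, g⟫ - y p) ^ 2) + 2 * (∑ p, (⟪u p, g⟫ - y p) * ⟪u p, h - g⟫)
        + ∑ p, ⟪u p, h - g⟫ ^ 2 := by
    rw [Finset.mul_sum, ← Finset.sum_add_distrib, ← Finset.sum_add_distrib]
    refine Finset.sum_congr rfl fun p _ => ?_
    have hp : ⟪u p, h⟫ = ⟪u p, g⟫ + ⟪u p, h - g⟫ := by
      rw [inner_sub_right]; ring
    rw [hp]; ring
  rw [expand, hn]; linarith

/-- **Differential Representer Theorem** (Theorem 3.5): for every `λ > 0`, the regularized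
empirical risk `R̂_{λ,N}(h) = (1/N) Σ_n ‖J∇h(Z^{(n)}) − X^{(n)}‖² + λ‖h‖²` has a minimizer
over `H_K`, the matrix `∇_{1,2}K(Z_N,Z_N) + λN I` is invertible, and every minimizer equals
`ĥ_{λ,N} = Σ_{i=1}^N ⟨ĉ_i, ∇₁K(Z^{(i)}, ·)⟩` with the vectorized coefficients
`ĉ = (∇_{1,2}K(Z_N,Z_N) + λN I)⁻¹ 𝕁ᵀ X_{σ²,N}`. -/
theorem differential_representer_theorem
    {d N : ℕ} (hN : 0 < N) (K : Euc (d + d) → Euc (d + d) → ℝ)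
    (hMercer : IsMercer K)
    (hCb : KernelCb (d + d) 3 K)
    {H : Type*} [NormedAddCommGroup H] [InnerProductSpace ℝ H] [CompleteSpace H]
    (emb : H →ₗ[ℝ] (Euc (d + d) → ℝ)) (sec : Euc (d + d) → H)
    (hRKHS : IsRKHS K emb sec)
    (Dsec : Euc (d + d) → Fin (d + d) → H) (hDsec : IsDiffSec K emb Dsec)
    (Z : Fin N → Euc (d + d)) (X : Fin N → Euc (d + d))
    (lam : ℝ) (hlam : 0 < lam) :
    IsUnit (gramD K Z + (lam * N) • (1 : Matrix (Fin N × Fin (d + d)) (Fin N × Fin (d + d)) ℝ)) ∧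
    (∃ g : H, ∀ h : H,
      (1 / (N : ℝ)) * ∑ n, ‖JgradE d (emb g) (Z n) - X n‖ ^ 2 + lam * ‖g‖ ^ 2
        ≤ (1 / (N : ℝ)) * ∑ n, ‖JgradE d (emb h) (Z n) - X n‖ ^ 2 + lam * ‖h‖ ^ 2) ∧
    ∀ g : H,
      (∀ h : H,
        (1 / (N : ℝ)) * ∑ n, ‖JgradE d (emb g) (Z n) - X n‖ ^ 2 + lam * ‖g‖ ^ 2
          ≤ (1 / (N : ℝ)) * ∑ n, ‖JgradE d (emb h) (Z n) - X n‖ ^ 2 + lam * ‖h‖ ^ 2) →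
      g = ∑ p : Fin N × Fin (d + d),
        Matrix.mulVec
          (gramD K Z + (lam * N) • (1 : Matrix (Fin N × Fin (d + d)) (Fin N × Fin (d + d)) ℝ))⁻¹
          (Matrix.mulVec (bigJ d N).transpose (fun q : Fin N × Fin (d + d) => X q.1 q.2)) p
        • Dsec (Z p.1) p.2 := by
    classical
  have hNpos : (0 : ℝ) < N := by exact_mod_cast hN
  set μ : ℝ := lam * N with hμdef
  have hμ : 0 < μ := by positivity
  -- the Gram matrix entries are inner products of the differential sections
  have hGram : ∀ p q : Fin N × Fin (d + d),
      gramD K Z p q = ⟪Dsec (Z p.1) p.2, Dsec (Z q.1) q.2⟫ := by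
    intro p q
    have h1 : emb (Dsec (Z q.1) q.2)
        = fun x => dirDeriv (ee (d + d) q.2) (K x) (Z q.1) := by
      rw [hDsec.1]
      funext x
      have hx : (fun x' => K x' x) = K x := funext fun x' => hMercer.1 x' x
      rw [hx]
    have h2 := hDsec.2 (Dsec (Z q.1) q.2) (Z p.1) p.2
    rw [h1] at h2
    exact h2
  have hUnit : IsUnit (gramD K Z + μ • (1 :
      Matrix (Fin N × Fin (d + d)) (Fin N × Fin (d + d)) ℝ)) :=
    aux_gram_isUnit _ μ hμ _ hGram
  set yX : Fin N × Fin (d + d) → ℝ := fun q : Fin N × Fin (d + d) => X q.1 q.2 with hyX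
  set M : Matrix (Fin N × Fin (d + d)) (Fin N × Fin (d + d)) ℝ := gramD K Z + μ • 1 with hMdef
  set c : Fin N × Fin (d + d) → ℝ := M⁻¹.mulVec ((bigJ d N).transpose.mulVec yX) with hcdef
  have hMc : M.mulVec c = (bigJ d N).transpose.mulVec yX := by
    rw [hcdef, Matrix.mulVec_mulVec,
      Matrix.mul_nonsing_inv _ ((Matrix.isUnit_iff_isUnit_det M).mp hUnit), Matrix.one_mulVec]
  set g : H := ∑ q : Fin N × Fin (d + d), c q • Dsec (Z q.1) q.2 with hgdef
  set u : (Fin N × Fin (d + d)) → H :=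
    fun p => ∑ j, Jmat d p.2 j • Dsec (Z p.1) j with hudef
  -- coordinates of the gradient
  have hgrad : ∀ (h : H) (x : Euc (d + d)) (j : Fin (d + d)),
      gradient (emb h) x j = ⟪Dsec x j, h⟫ := by
    intro h x j
    have h1 : gradient (emb h) x j = ⟪gradient (emb h) x, ee (d + d) j⟫ := by
      rw [ee, EuclideanSpace.inner_single_right]; simp
    rw [h1, gradient, InnerProductSpace.toDual_symm_apply]
    exact hDsec.2 h x j
  -- ⟪u p, h⟫ computes the Hamiltonian vector field coordinates
  have hup : ∀ (h : H) (p : Fin N × Fin (d + d)),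
      ⟪u p, h⟫ = JgradE d (emb h) (Z p.1) p.2 := by
    intro h p
    rw [JgradE, mulVecE, WithLp.equiv_symm_apply, WithLp.ofLp_toLp]
    simp only [hudef, sum_inner, real_inner_smul_left, Matrix.mulVec, dotProduct]
    refine Finset.sum_congr rfl fun j _ => ?_
    rw [← hgrad h]; rfl
  -- the empirical risk as a finite-dimensional least squares functional
  have hsum : ∀ h : H, (∑ n, ‖JgradE d (emb h) (Z n) - X n‖ ^ 2)
      = ∑ p : Fin N × Fin (d + d), (⟪u p, h⟫ - yX p) ^ 2 := by
    intro h
    rw [Fintype.sum_prod_type]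
    refine Finset.sum_congr rfl fun n _ => ?_
    rw [← real_inner_self_eq_norm_sq, PiLp.inner_apply]
    refine Finset.sum_congr rfl fun i _ => ?_
    rw [hup h (n, i)]
    simp [RCLike.inner_apply, sq, hyX]
  -- inner products with g
  have hDg : ∀ r : Fin N × Fin (d + d),
      ⟪Dsec (Z r.1) r.2, g⟫ = (gramD K Z).mulVec c r := by
    intro r
    rw [hgdef, inner_sum]
    simp only [real_inner_smul_right, Matrix.mulVec, dotProduct]
    exact Finset.sum_congr rfl fun q _ => by rw [← hGram r q]; ring
  have hug : ∀ p, ⟪u p, g⟫ = (bigJ d N).mulVec ((gramD K Z).mulVec c) p := by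
    intro p
    simp only [hudef, sum_inner, real_inner_smul_left]
    rw [Matrix.mulVec, dotProduct, Fintype.sum_prod_type]
    rw [Finset.sum_eq_single p.1]
    · refine Finset.sum_congr rfl fun j _ => ?_
      rw [hDg (p.1, j)]
      simp [bigJ]
    · intro b _ hb
      simp [bigJ, Ne.symm hb]
    · simp
  -- the normal equation
  set aa : (Fin N × Fin (d + d)) → ℝ :=
    (bigJ d N).mulVec ((gramD K Z).mulVec c) - yX with haadef
  have haap : ∀ p, ⟪u p, g⟫ - yX p = aa p := by
    intro p; rw [hug p]; simp [haadef]
  have hbvec : ∀ q, ((bigJ d N).transpose.mulVec aa) q + μ * c q = 0 := by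
    have h1 : (bigJ d N).transpose.mulVec aa
        = (gramD K Z).mulVec c - (bigJ d N).transpose.mulVec yX := by
      rw [haadef, Matrix.mulVec_sub, Matrix.mulVec_mulVec, bigJ_orth, Matrix.one_mulVec]
    have hMmul : M.mulVec c = (gramD K Z).mulVec c + μ • c := by
      rw [hMdef, Matrix.add_mulVec, Matrix.smul_mulVec, Matrix.one_mulVec]
    intro q
    have h2 := congrFun hMc q
    rw [hMmul] at h2
    have h3 := congrFun h1 q
    simp only [Pi.sub_apply, Pi.add_apply, Pi.smul_apply, smul_eq_mul] at h2 h3 ⊢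
    rw [h3]; linarith
  have e3 : ∀ q : Fin N × Fin (d + d),
      ((bigJ d N).transpose.mulVec aa) q = ∑ i, aa (q.1, i) * Jmat d i q.2 := by
    intro q
    rw [Matrix.mulVec, dotProduct, Fintype.sum_prod_type]
    rw [Finset.sum_eq_single q.1]
    · refine Finset.sum_congr rfl fun i _ => ?_
      simp [bigJ, Matrix.transpose_apply, mul_comm]
    · intro b _ hb
      simp [bigJ, Matrix.transpose_apply, hb]
    · simp
  have hNE : (∑ p, (⟪u p, g⟫ - yX p) • u p) + μ • g = 0 := by
    have e1 : (∑ p, (⟪u p, g⟫ - yX p) • u p)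
        = ∑ p : Fin N × Fin (d + d), ∑ j, (aa p * Jmat d p.2 j) • Dsec (Z p.1) j := by
      refine Finset.sum_congr rfl fun p _ => ?_
      rw [haap p, hudef, Finset.smul_sum]
      exact Finset.sum_congr rfl fun j _ => (smul_smul _ _ _)
    have e2 : (∑ p : Fin N × Fin (d + d), ∑ j, (aa p * Jmat d p.2 j) • Dsec (Z p.1) j)
        = ∑ q : Fin N × Fin (d + d), (∑ i, aa (q.1, i) * Jmat d i q.2) • Dsec (Z q.1) q.2 := by
      rw [Fintype.sum_prod_type, Fintype.sum_prod_type]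
      refine Finset.sum_congr rfl fun m _ => ?_
      rw [Finset.sum_comm]
      refine Finset.sum_congr rfl fun j _ => ?_
      rw [Finset.sum_smul]
    have e4 : μ • g = ∑ q : Fin N × Fin (d + d), (μ * c q) • Dsec (Z q.1) q.2 := by
      rw [hgdef, Finset.smul_sum]
      exact Finset.sum_congr rfl fun q _ => (smul_smul _ _ _)
    rw [e1, e2, e4, ← Finset.sum_add_distrib]
    refine Finset.sum_eq_zero fun q _ => ?_
    rw [← add_smul, ← e3 q, hbvec q, zero_smul]
  -- rewrite the empirical risk
  have hrisk : ∀ h : H,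
      (1 / (N : ℝ)) * ∑ n, ‖JgradE d (emb h) (Z n) - X n‖ ^ 2 + lam * ‖h‖ ^ 2
        = (1 / (N : ℝ)) * ((∑ p : Fin N × Fin (d + d), (⟪u p, h⟫ - yX p) ^ 2)
            + μ * ‖h‖ ^ 2) := by
    intro h
    rw [hsum h, hμdef]
    field_simp
  have hKI := fun h => aux_key_identity u yX μ g hNE h
  have hmin : ∀ h : H,
      (1 / (N : ℝ)) * ∑ n, ‖JgradE d (emb g) (Z n) - X n‖ ^ 2 + lam * ‖g‖ ^ 2
        ≤ (1 / (N : ℝ)) * ∑ n, ‖JgradE d (emb h) (Z n) - X n‖ ^ 2 + lam * ‖h‖ ^ 2 := by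
    intro h
    rw [hrisk g, hrisk h]
    refine mul_le_mul_of_nonneg_left ?_ (by positivity)
    rw [hKI h]
    have h4 : (0:ℝ) ≤ ∑ p : Fin N × Fin (d + d), ⟪u p, h - g⟫ ^ 2 :=
      Finset.sum_nonneg fun p _ => sq_nonneg _
    nlinarith [sq_nonneg ‖h - g‖]
  refine ⟨hUnit, ⟨g, hmin⟩, ?_⟩
  intro g' hg'
  have h1 := hg' g
  rw [hrisk g', hrisk g] at h1
  have h2 : (∑ p : Fin N × Fin (d + d), (⟪u p, g'⟫ - yX p) ^ 2) + μ * ‖g'‖ ^ 2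
      ≤ (∑ p : Fin N × Fin (d + d), (⟪u p, g⟫ - yX p) ^ 2) + μ * ‖g‖ ^ 2 := by
    have hN' : (0:ℝ) < 1 / (N : ℝ) := by positivity
    exact le_of_mul_le_mul_left h1 hN'
  have h3 := hKI g'
  have h4 : (0:ℝ) ≤ ∑ p : Fin N × Fin (d + d), ⟪u p, g' - g⟫ ^ 2 :=
    Finset.sum_nonneg fun p _ => sq_nonneg _
  have h5 : ‖g' - g‖ ^ 2 ≤ 0 := by nlinarith
  have h6 : g' - g = 0 := by
    have h7 : ‖g' - g‖ ^ 2 = 0 := le_antisymm h5 (sq_nonneg _)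
    have h8 : ‖g' - g‖ = 0 := by
      nlinarith [norm_nonneg (g' - g)]
    exact norm_eq_zero.mp h8
  rw [sub_eq_zero] at h6
  rw [h6]
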